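/- A numerical semigroup S is pseudo-symmetric if and only if l(S) = 1. -/

import Mathlib

def IsNumericalSemigroup (S : Set ℕ) : Prop :=
  0 ∈ S ∧ (∀ a ∈ S, ∀ b ∈ S, a + b ∈ S) ∧ Sᶜ.Finite

noncomputable def frobNS (S : Set ℕ) : ℤ :=
  sSup (insert (-1) ((fun n : ℕ => (n : ℤ)) '' Sᶜ))

def toZNS (S : Set ℕ) : Set ℤ := {z : ℤ | ∃ n ∈ S, (n : ℤ) = z}

noncomputable def genusNS (S : Set ℕ) : ℕ := Sᶜ.ncard

def smallNS (S : Set ℕ) : Set ℕ := {s ∈ S | (s : ℤ) < frobNS S}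

noncomputable def nNS (S : Set ℕ) : ℕ := (smallNS S).ncard

def LgapsNS (S : Set ℕ) : Set ℕ :=
  {x : ℕ | x ∉ S ∧ frobNS S - (x : ℤ) ∉ toZNS (smallNS S)}

noncomputable def lNS (S : Set ℕ) : ℕ := (LgapsNS S).ncard

noncomputable def hNS (S : Set ℕ) : ℕ := sSup (LgapsNS S)

def PFNS (S : Set ℕ) : Set ℤ :=
  {x : ℤ | x ∉ toZNS S ∧ ∀ s ∈ S, s ≠ 0 → x + (s : ℤ) ∈ toZNS S}

noncomputable def typeNS (S : Set ℕ) : ℕ := (PFNS S).ncard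

def msgNS (S : Set ℕ) : Set ℕ :=
  {x : ℕ | x ∈ S ∧ x ≠ 0 ∧ ∀ a ∈ S, ∀ b ∈ S, a ≠ 0 → b ≠ 0 → a + b ≠ x}

noncomputable def multNS (S : Set ℕ) : ℕ := sInf (S \ {0})

def IsIrreducibleNS (S : Set ℕ) : Prop :=
  IsNumericalSemigroup S ∧
    ¬ ∃ T₁ T₂ : Set ℕ, IsNumericalSemigroup T₁ ∧ IsNumericalSemigroup T₂ ∧
        S ⊂ T₁ ∧ S ⊂ T₂ ∧ S = T₁ ∩ T₂

def IsSymmetricNS (S : Set ℕ) : Prop := IsIrreducibleNS S ∧ Odd (frobNS S)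

def IsPseudoSymmetricNS (S : Set ℕ) : Prop := IsIrreducibleNS S ∧ Even (frobNS S)

def genNS (A : Set ℕ) : Set ℕ := (AddSubmonoid.closure A : Set ℕ)

def IsURSYNS (S : Set ℕ) : Prop :=
  ∃ T : Set ℕ, ∃ x : ℕ, IsSymmetricNS T ∧ x ∈ msgNS T ∧ S = T \ {x}

def IsURPSYNS (S : Set ℕ) : Prop :=
  ∃ T : Set ℕ, ∃ x : ℕ, IsPseudoSymmetricNS T ∧ x ∈ msgNS T ∧ S = T \ {x}

def deltaNS (S : Set ℕ) : Set ℕ := {s ∈ S | 2 * (s : ℤ) < frobNS S}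

def thetaNS (S : Set ℕ) : Set ℕ :=
  genNS (deltaNS S) ∪ {n : ℕ | frobNS S < (n : ℤ)}

noncomputable def CNS (F : ℕ) : Set ℕ :=
  if Odd F then (({0} : Set ℕ) ∪ {n : ℕ | (F + 1) / 2 ≤ n}) \ {F}
  else (({0} : Set ℕ) ∪ {n : ℕ | F / 2 + 1 ≤ n}) \ {F}

section Aux
variable {S : Set ℕ} {x n f h : ℕ}

lemma le_frob (hS : IsNumericalSemigroup S) (hx : x ∉ S) : (x : ℤ) ≤ frobNS S :=
  le_csSup ((hS.2.2.image _).insert _).bddAbove (Set.mem_insert_of_mem _ ⟨x, hx, rfl⟩)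

lemma mem_of_frob_lt (hS : IsNumericalSemigroup S) (hn : frobNS S < (n : ℤ)) : n ∈ S := by
  by_contra hc; exact absurd (le_frob hS hc) (not_le.mpr hn)

lemma frob_spec (hS : IsNumericalSemigroup S) :
    frobNS S = -1 ∨ ∃ f : ℕ, f ∉ S ∧ (f : ℤ) = frobNS S := by
  have hmem : frobNS S ∈ insert (-1) ((fun n : ℕ => (n : ℤ)) '' Sᶜ) :=
    Set.Nonempty.csSup_mem ⟨-1, Set.mem_insert _ _⟩ ((hS.2.2.image _).insert _)
  rcases hmem with hh | ⟨g, hg, hge⟩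
  · exact Or.inl hh
  · exact Or.inr ⟨g, hg, hge⟩

variable (hS : IsNumericalSemigroup S) (hf : f ∉ S) (hfF : (f : ℤ) = frobNS S)
include hS hf hfF

lemma gap_le (hx : x ∉ S) : x ≤ f := by
  have := le_frob hS hx; rw [← hfF] at this; exact_mod_cast this

lemma f_pos : 0 < f := Nat.pos_of_ne_zero (fun hc => hf (hc ▸ hS.1))

lemma memL_iff : x ∈ LgapsNS S ↔ x ∉ S ∧ f - x ∉ S := by
  have h0 : 0 ∈ S := hS.1
  constructor
  · rintro ⟨hx, hFx⟩
    refine ⟨hx, fun hmem => hFx ?_⟩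
    have hxf : x ≤ f := gap_le hS hf hfF hx
    have hx0 : x ≠ 0 := fun hc => hx (hc ▸ h0)
    refine ⟨f - x, ⟨hmem, ?_⟩, ?_⟩
    · rw [← hfF]; have : f - x < f := by omega
      exact_mod_cast this
    · rw [← hfF]; push_cast [Nat.cast_sub hxf]; ring
  · rintro ⟨hx, h2⟩
    refine ⟨hx, ?_⟩
    rintro ⟨n, ⟨hn, -⟩, he⟩
    have hxf : x ≤ f := gap_le hS hf hfF hx
    rw [← hfF] at he
    have : n = f - x := by omega
    exact h2 (this ▸ hn)

lemma memL_symm (hx : x ∈ LgapsNS S) : f - x ∈ LgapsNS S := by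
  rw [memL_iff hS hf hfF] at hx ⊢
  have hxf : x ≤ f := gap_le hS hf hfF hx.1
  exact ⟨hx.2, by rw [Nat.sub_sub_self hxf]; exact hx.1⟩

lemma f_not_memL : f ∉ LgapsNS S := by
  rw [memL_iff hS hf hfF]
  rintro ⟨-, hc⟩
  exact hc (by simpa using hS.1)

lemma union_f_ns : IsNumericalSemigroup (S ∪ {f}) := by
  have hfp := f_pos hS hf hfF
  refine ⟨Or.inl hS.1, ?_, hS.2.2.subset (Set.compl_subset_compl.mpr Set.subset_union_left)⟩
  have key : ∀ a ∈ S, a ≠ 0 → a + f ∈ S := by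
    intro a ha ha0
    refine mem_of_frob_lt hS ?_
    rw [← hfF]; exact_mod_cast (by omega : f < a + f)
  rintro a (ha | ha) b (hb | hb)
  · exact Or.inl (hS.2.1 a ha b hb)
  · simp only [Set.mem_singleton_iff] at hb; subst hb
    rcases eq_or_ne a 0 with rfl | ha0
    · simp
    · exact Or.inl (key a ha ha0)
  · simp only [Set.mem_singleton_iff] at ha; subst ha
    rcases eq_or_ne b 0 with rfl | hb0
    · simp
    · rw [add_comm]; exact Or.inl (key b hb hb0)
  · simp only [Set.mem_singleton_iff] at ha hb
    refine Or.inl (mem_of_frob_lt hS ?_)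
    rw [← hfF, ha, hb]
    have : f < f + f := by omega
    exact_mod_cast this

lemma union_h_ns (hh : h ∈ LgapsNS S) (h2 : f < 2 * h)
    (hmax : ∀ y ∈ LgapsNS S, 2 * y ≠ f → y ≤ h) : IsNumericalSemigroup (S ∪ {h}) := by
  have hhS : h ∉ S := hh.1
  have hhf : h ≤ f := gap_le hS hf hfF hhS
  have hfhS : f - h ∉ S := ((memL_iff hS hf hfF).mp hh).2
  refine ⟨Or.inl hS.1, ?_, hS.2.2.subset (Set.compl_subset_compl.mpr Set.subset_union_left)⟩
  have key : ∀ a ∈ S, a ≠ 0 → a + h ∈ S := by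
    intro a ha ha0
    by_contra hns
    have hahf : a + h ≤ f := gap_le hS hf hfF hns
    have hL : a + h ∈ LgapsNS S := by
      rw [memL_iff hS hf hfF]
      refine ⟨hns, fun hmem => hfhS ?_⟩
      have := hS.2.1 _ hmem a ha
      rwa [show f - (a + h) + a = f - h from by omega] at this
    have := hmax _ hL (by omega)
    omega
  rintro a (ha | ha) b (hb | hb)
  · exact Or.inl (hS.2.1 a ha b hb)
  · simp only [Set.mem_singleton_iff] at hb; subst hb
    rcases eq_or_ne a 0 with rfl | ha0
    · simp
    · exact Or.inl (key a ha ha0)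
  · simp only [Set.mem_singleton_iff] at ha; subst ha
    rcases eq_or_ne b 0 with rfl | hb0
    · simp
    · rw [add_comm]; exact Or.inl (key b hb hb0)
  · simp only [Set.mem_singleton_iff] at ha hb
    refine Or.inl (mem_of_frob_lt hS ?_)
    rw [← hfF, ha, hb]
    have : f < h + h := by omega
    exact_mod_cast this

lemma no_ext {T : Set ℕ} (hL : LgapsNS S = {h}) (hfh : f = h + h)
    (hT : IsNumericalSemigroup T) (hsub : S ⊂ T) (hfT : f ∉ T) : False := by
  obtain ⟨x, hxT, hxS⟩ : ∃ x, x ∈ T ∧ x ∉ S := Set.exists_of_ssubset hsub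
  by_cases hxL : x ∈ LgapsNS S
  · rw [hL, Set.mem_singleton_iff] at hxL; subst hxL
    exact hfT (hfh ▸ hT.2.1 x hxT x hxT)
  · have hxf : x ≤ f := gap_le hS hf hfF hxS
    have hfx : f - x ∈ S := by
      by_contra hc
      exact hxL ((memL_iff hS hf hfF).mpr ⟨hxS, hc⟩)
    have := hT.2.1 x hxT (f - x) (hsub.1 hfx)
    rw [show x + (f - x) = f from by omega] at this
    exact hfT this

end Aux

/-- A numerical semigroup S is pseudo-symmetric if and only if l(S) = 1. -/
theorem stmt2 (S : Set ℕ) (hS : IsNumericalSemigroup S) :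
    IsPseudoSymmetricNS S ↔ lNS S = 1 := by
  constructor
  · rintro ⟨⟨-, hirr⟩, heven⟩
    rcases frob_spec hS with hF | ⟨f, hf, hfF⟩
    · rw [hF] at heven; rcases heven with ⟨r, hr⟩; omega
    have hfe : Even f := by
      rw [← hfF] at heven; exact_mod_cast heven
    obtain ⟨m, hm⟩ := hfe
    have hmS : m ∉ S := fun h => hf (by rw [hm]; exact hS.2.1 m h m h)
    have hmL : m ∈ LgapsNS S := by
      rw [memL_iff hS hf hfF]
      exact ⟨hmS, by rw [show f - m = m from by omega]; exact hmS⟩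
    have hsub : LgapsNS S ⊆ {m} := by
      intro x hx
      by_contra hxm
      simp only [Set.mem_singleton_iff] at hxm
      have hL'fin : {y ∈ LgapsNS S | 2 * y ≠ f}.Finite :=
        hS.2.2.subset (fun y hy => hy.1.1)
      have hL'ne : {y ∈ LgapsNS S | 2 * y ≠ f}.Nonempty := ⟨x, hx, by omega⟩
      obtain ⟨h, hhL', hmax'⟩ := hL'fin.exists_maximalFor id _ hL'ne
      have hmax : ∀ y ∈ LgapsNS S, 2 * y ≠ f → y ≤ h := by
        intro y hy hy2
        by_contra hlt
        have := hmax' (j := y) ⟨hy, hy2⟩ (le_of_lt (not_le.mp hlt))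
        simp only [id_eq] at this
        omega
      have hhL : h ∈ LgapsNS S := hhL'.1
      have h2f : 2 * h ≠ f := hhL'.2
      have hhf : h ≤ f := gap_le hS hf hfF hhL.1
      have hfhL : f - h ∈ LgapsNS S := memL_symm hS hf hfF hhL
      have hfh' : f - h ≤ h := hmax _ hfhL (by omega)
      have h2 : f < 2 * h := by omega
      refine hirr ⟨S ∪ {h}, S ∪ {f}, union_h_ns hS hf hfF hhL h2 hmax,
        union_f_ns hS hf hfF, ?_, ?_, ?_⟩
      · rw [Set.union_singleton]; exact Set.ssubset_insert hhL.1
      · rw [Set.union_singleton]; exact Set.ssubset_insert hf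
      · ext y
        simp only [Set.mem_inter_iff, Set.mem_union, Set.mem_singleton_iff]
        constructor
        · intro hy; exact ⟨Or.inl hy, Or.inl hy⟩
        · rintro ⟨hy | rfl, hy' | hy'⟩
          · exact hy
          · exact hy
          · exact hy'
          · exact absurd (hy' ▸ hhL) (f_not_memL hS hf hfF)
    have hLm : LgapsNS S = {m} :=
      Set.Subset.antisymm hsub (Set.singleton_subset_iff.mpr hmL)
    show (LgapsNS S).ncard = 1
    rw [hLm]; exact Set.ncard_singleton m
  · intro hl
    obtain ⟨h, hLh⟩ := Set.ncard_eq_one.mp hl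
    rcases frob_spec hS with hF | ⟨f, hf, hfF⟩
    · exfalso
      have hhL : h ∈ LgapsNS S := by rw [hLh]; exact rfl
      have := le_frob hS hhL.1
      rw [hF] at this; omega
    have hhL : h ∈ LgapsNS S := by rw [hLh]; exact rfl
    have hfhL : f - h ∈ LgapsNS S := memL_symm hS hf hfF hhL
    rw [hLh, Set.mem_singleton_iff] at hfhL
    have hhf : h ≤ f := gap_le hS hf hfF hhL.1
    have hf2 : f = h + h := by omega
    constructor
    · refine ⟨hS, ?_⟩
      rintro ⟨T₁, T₂, hT₁, hT₂, hs1, hs2, heq⟩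
      have hfm : f ∉ T₁ ∩ T₂ := heq ▸ hf
      rcases (by tauto : f ∉ T₁ ∨ f ∉ T₂) with hc | hc
      · exact no_ext hS hf hfF hLh hf2 hT₁ hs1 hc
      · exact no_ext hS hf hfF hLh hf2 hT₂ hs2 hc
    · rw [← hfF]
      exact (Int.even_coe_nat f).mpr ⟨h, hf2⟩
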